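/- The 8-dimensional algebra S1-bar with basis e_1,...,e_8 and nonzero products e_3e_3=-3e_4, e_3e_5=e_6, e_3e_8=-e_7, e_5e_1=-2e_1, e_5e_2=-3e_2, e_5e_3=-e_3, e_5e_5=-2e_5, e_5e_6=-e_6, e_5e_7=-e_7, e_5e_8=-2e_8, e_6e_3=3e_4, e_6e_5=-e_6, e_6e_8=e_7, e_7e_3=3e_4, e_7e_5=-e_6, e_7e_8=e_7, e_8e_2=e_2, e_8e_3=-e_3, e_8e_4=-2e_4, e_8e_6=-e_6, e_8e_7=-e_7 is terminal: it satisfies, for all a,b,x,y, the identity b(a(xy)-(ax)y-x(ay)) - a((bx)y) + (a(bx))y + (bx)(ay) - a(x(by)) + (ax)(by) + x(a(by)) = -F(a,b)(xy) + (F(a,b)x)y + x(F(a,b)y) with F(a,b)=(1/3)(2ab+ba). -/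
import Mathlib


def tbl (F : Type*) [Field F] : Fin 8 → Fin 8 → Fin 8 → F :=
  ![![![0, 0, 0, 0, 0, 0, 0, 0], ![0, 0, 0, 0, 0, 0, 0, 0], ![0, 0, 0, 0, 0, 0, 0, 0], ![0, 0, 0, 0, 0, 0, 0, 0], ![0, 0, 0, 0, 0, 0, 0, 0], ![0, 0, 0, 0, 0, 0, 0, 0], ![0, 0, 0, 0, 0, 0, 0, 0], ![0, 0, 0, 0, 0, 0, 0, 0]],
    ![![0, 0, 0, 0, 0, 0, 0, 0], ![0, 0, 0, 0, 0, 0, 0, 0], ![0, 0, 0, 0, 0, 0, 0, 0], ![0, 0, 0, 0, 0, 0, 0, 0], ![0, 0, 0, 0, 0, 0, 0, 0], ![0, 0, 0, 0, 0, 0, 0, 0], ![0, 0, 0, 0, 0, 0, 0, 0], ![0, 0, 0, 0, 0, 0, 0, 0]],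
    ![![0, 0, 0, 0, 0, 0, 0, 0], ![0, 0, 0, 0, 0, 0, 0, 0], ![0, 0, 0, -3, 0, 0, 0, 0], ![0, 0, 0, 0, 0, 0, 0, 0], ![0, 0, 0, 0, 0, 1, 0, 0], ![0, 0, 0, 0, 0, 0, 0, 0], ![0, 0, 0, 0, 0, 0, 0, 0], ![0, 0, 0, 0, 0, 0, -1, 0]],
    ![![0, 0, 0, 0, 0, 0, 0, 0], ![0, 0, 0, 0, 0, 0, 0, 0], ![0, 0, 0, 0, 0, 0, 0, 0], ![0, 0, 0, 0, 0, 0, 0, 0], ![0, 0, 0, 0, 0, 0, 0, 0], ![0, 0, 0, 0, 0, 0, 0, 0], ![0, 0, 0, 0, 0, 0, 0, 0], ![0, 0, 0, 0, 0, 0, 0, 0]],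
    ![![-2, 0, 0, 0, 0, 0, 0, 0], ![0, -3, 0, 0, 0, 0, 0, 0], ![0, 0, -1, 0, 0, 0, 0, 0], ![0, 0, 0, 0, 0, 0, 0, 0], ![0, 0, 0, 0, -2, 0, 0, 0], ![0, 0, 0, 0, 0, -1, 0, 0], ![0, 0, 0, 0, 0, 0, -1, 0], ![0, 0, 0, 0, 0, 0, 0, -2]],
    ![![0, 0, 0, 0, 0, 0, 0, 0], ![0, 0, 0, 0, 0, 0, 0, 0], ![0, 0, 0, 3, 0, 0, 0, 0], ![0, 0, 0, 0, 0, 0, 0, 0], ![0, 0, 0, 0, 0, -1, 0, 0], ![0, 0, 0, 0, 0, 0, 0, 0], ![0, 0, 0, 0, 0, 0, 0, 0], ![0, 0, 0, 0, 0, 0, 1, 0]],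
    ![![0, 0, 0, 0, 0, 0, 0, 0], ![0, 0, 0, 0, 0, 0, 0, 0], ![0, 0, 0, 3, 0, 0, 0, 0], ![0, 0, 0, 0, 0, 0, 0, 0], ![0, 0, 0, 0, 0, -1, 0, 0], ![0, 0, 0, 0, 0, 0, 0, 0], ![0, 0, 0, 0, 0, 0, 0, 0], ![0, 0, 0, 0, 0, 0, 1, 0]],
    ![![0, 0, 0, 0, 0, 0, 0, 0], ![0, 1, 0, 0, 0, 0, 0, 0], ![0, 0, -1, 0, 0, 0, 0, 0], ![0, 0, 0, -2, 0, 0, 0, 0], ![0, 0, 0, 0, 0, 0, 0, 0], ![0, 0, 0, 0, 0, -1, 0, 0], ![0, 0, 0, 0, 0, 0, -1, 0], ![0, 0, 0, 0, 0, 0, 0, 0]]]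

def mul (F : Type*) [Field F] (x y : Fin 8 → F) : Fin 8 → F :=
  fun k => ∑ i, ∑ j, x i * y j * tbl F i j k


section Aux
variable {α : Type*} {m : ℕ}

@[simp] lemma cons_val_five' (x : α) (u : Fin (m+5) → α) :
    Matrix.vecCons x u 5 = Matrix.vecHead (Matrix.vecTail (Matrix.vecTail (Matrix.vecTail (Matrix.vecTail u)))) := rfl

@[simp] lemma cons_val_six' (x : α) (u : Fin (m+6) → α) :
    Matrix.vecCons x u 6 = Matrix.vecHead (Matrix.vecTail (Matrix.vecTail (Matrix.vecTail (Matrix.vecTail (Matrix.vecTail u))))) := rfl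

@[simp] lemma cons_val_seven' (x : α) (u : Fin (m+7) → α) :
    Matrix.vecCons x u 7 = Matrix.vecHead (Matrix.vecTail (Matrix.vecTail (Matrix.vecTail (Matrix.vecTail (Matrix.vecTail (Matrix.vecTail u)))))) := rfl

end Aux

lemma mul_apply0 (F : Type*) [Field F] (x y : Fin 8 → F) :
    mul F x y 0 = -2 * x 4 * y 0 := by
  simp [mul, Fin.sum_univ_eight, tbl, Matrix.vecHead, Matrix.vecTail]; ring

lemma mul_apply1 (F : Type*) [Field F] (x y : Fin 8 → F) :
    mul F x y 1 = -3 * x 4 * y 1 + x 7 * y 1 := by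
  simp [mul, Fin.sum_univ_eight, tbl, Matrix.vecHead, Matrix.vecTail]; ring

lemma mul_apply2 (F : Type*) [Field F] (x y : Fin 8 → F) :
    mul F x y 2 = -(x 4 * y 2) - x 7 * y 2 := by
  simp [mul, Fin.sum_univ_eight, tbl, Matrix.vecHead, Matrix.vecTail]; ring

lemma mul_apply3 (F : Type*) [Field F] (x y : Fin 8 → F) :
    mul F x y 3 = -3 * x 2 * y 2 + 3 * x 5 * y 2 + 3 * x 6 * y 2 - 2 * x 7 * y 3 := by
  simp [mul, Fin.sum_univ_eight, tbl, Matrix.vecHead, Matrix.vecTail]; ring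

lemma mul_apply4 (F : Type*) [Field F] (x y : Fin 8 → F) :
    mul F x y 4 = -2 * x 4 * y 4 := by
  simp [mul, Fin.sum_univ_eight, tbl, Matrix.vecHead, Matrix.vecTail]; ring

lemma mul_apply5 (F : Type*) [Field F] (x y : Fin 8 → F) :
    mul F x y 5 = x 2 * y 4 - x 4 * y 5 - x 5 * y 4 - x 6 * y 4 - x 7 * y 5 := by
  simp [mul, Fin.sum_univ_eight, tbl, Matrix.vecHead, Matrix.vecTail]; ring

lemma mul_apply6 (F : Type*) [Field F] (x y : Fin 8 → F) :
    mul F x y 6 = -(x 2 * y 7) - x 4 * y 6 + x 5 * y 7 + x 6 * y 7 - x 7 * y 6 := by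
  simp [mul, Fin.sum_univ_eight, tbl, Matrix.vecHead, Matrix.vecTail]; ring

lemma mul_apply7 (F : Type*) [Field F] (x y : Fin 8 → F) :
    mul F x y 7 = -2 * x 4 * y 7 := by
  simp [mul, Fin.sum_univ_eight, tbl, Matrix.vecHead, Matrix.vecTail]; ring

/-- The associated multiplication of a terminal algebra: `F(a,b) = (1/3)(2ab+ba)`. -/
def termF (F : Type*) [Field F] (a b : Fin 8 → F) : Fin 8 → F :=
  (3 : F)⁻¹ • ((2 : F) • mul F a b + mul F b a)


lemma fmk0 (h : 0 < 8) : (⟨0, h⟩ : Fin 8) = 0 := rfl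
lemma fmk1 (h : 1 < 8) : (⟨1, h⟩ : Fin 8) = 1 := rfl
lemma fmk2 (h : 2 < 8) : (⟨2, h⟩ : Fin 8) = 2 := rfl
lemma fmk3 (h : 3 < 8) : (⟨3, h⟩ : Fin 8) = 3 := rfl
lemma fmk4 (h : 4 < 8) : (⟨4, h⟩ : Fin 8) = 4 := rfl
lemma fmk5 (h : 5 < 8) : (⟨5, h⟩ : Fin 8) = 5 := rfl
lemma fmk6 (h : 6 < 8) : (⟨6, h⟩ : Fin 8) = 6 := rfl
lemma fmk7 (h : 7 < 8) : (⟨7, h⟩ : Fin 8) = 7 := rfl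

lemma termF_apply (F : Type*) [Field F] (a b : Fin 8 → F) (k : Fin 8) :
    termF F a b k = (3 : F)⁻¹ * (2 * mul F a b k + mul F b a k) := by
  simp [termF]

set_option maxHeartbeats 1600000 in
/-- `S₁`-bar is a terminal algebra. -/
theorem S1bar_terminal (F : Type*) [Field F] [CharZero F] (a b x y : Fin 8 → F) :
    mul F b (mul F a (mul F x y) - mul F (mul F a x) y - mul F x (mul F a y)) - mul F a (mul F (mul F b x) y) + mul F (mul F a (mul F b x)) y + mul F (mul F b x) (mul F a y) - mul F a (mul F x (mul F b y)) + mul F (mul F a x) (mul F b y) + mul F x (mul F a (mul F b y))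
      = - mul F (termF F a b) (mul F x y) + mul F (mul F (termF F a b) x) y + mul F x (mul F (termF F a b) y) := by
  have h3 : (3 : F) ≠ 0 := three_ne_zero
  funext k
  fin_cases k <;>
  · simp only [Pi.add_apply, Pi.sub_apply, Pi.neg_apply, termF_apply,
      mul_apply0, mul_apply1, mul_apply2, mul_apply3, mul_apply4,
      mul_apply5, mul_apply6, mul_apply7,
      fmk0, fmk1, fmk2, fmk3, fmk4, fmk5, fmk6, fmk7]
    ring
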